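/- Let G be a finite connected graph with n vertices, α > 0, and let Q^(ℓ) denote the generator of the symmetric exclusion process with ℓ black marbles and rate α. Let m < ℓ and let ψ^(m) be an eigenvector of -Q^(m) with eigenvalue λ. Define ψ on configurations x with ℓ black marbles by ψ(x) = Σ_{y ≤ x, ||y|| = m} ψ^(m)(y), where the sum is over all configurations y with m black marbles satisfying y(v) ≤ x(v) for all v. Then -Q^(ℓ) ψ = λ ψ; in particular, ψ is either identically zero or an eigenvector of -Q^(ℓ) with eigenvalue λ. -/

import Mathlib

open Finset

/-- Swap the values of a configuration at two vertices. -/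
def swapAt {V : Type*} [DecidableEq V] (x : V → Bool) (u v : V) : V → Bool :=
  fun w => if w = u then x v else if w = v then x u else x w

/-- Number of black marbles (`true` coordinates) of a configuration. -/
def countB {V : Type*} [Fintype V] (x : V → Bool) : ℕ :=
  (Finset.univ.filter fun v => x v = true).card

/-- The negative generator `-Q` of the symmetric exclusion process on `G` with rate `α`:
`(-Qf)(x) = α Σ_{e ∈ E(G)} (f x - f x_e)`, written as half the sum over ordered adjacent pairs. -/
noncomputable def negGen {V : Type*} [Fintype V] [DecidableEq V] (G : SimpleGraph V) [DecidableRel G.Adj]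
    (α : ℝ) (f : (V → Bool) → ℝ) (x : V → Bool) : ℝ :=
  (α / 2) * ∑ u : V, ∑ v : V, if G.Adj u v then f x - f (swapAt x u v) else 0

/-- `ψ_+(x) = Σ_{v : x(v)=0} ψ(x_v)`, adding a black marble at `v`. -/
def plusOp {V : Type*} [Fintype V] [DecidableEq V] (ψ : (V → Bool) → ℝ) (x : V → Bool) : ℝ :=
  ∑ v ∈ Finset.univ.filter (fun v => x v = false), ψ (Function.update x v true)

/-- `ψ_-(x) = Σ_{v : x(v)=1} ψ(x_v)`, removing the black marble at `v`. -/
def minusOp {V : Type*} [Fintype V] [DecidableEq V] (ψ : (V → Bool) → ℝ) (x : V → Bool) : ℝ :=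
  ∑ v ∈ Finset.univ.filter (fun v => x v = true), ψ (Function.update x v false)

/-- Inner product at level `ℓ` with respect to the uniform measure on `ℓ`-subsets. -/
noncomputable def innerL {V : Type*} [Fintype V] [DecidableEq V] (ℓ : ℕ) (f g : (V → Bool) → ℝ) : ℝ :=
  (((Fintype.card V).choose ℓ : ℝ))⁻¹ *
    ∑ x ∈ Finset.univ.filter (fun x : V → Bool => countB x = ℓ), f x * g x

/-- Inner product on the full configuration space with respect to the uniform measure. -/
noncomputable def innerF {V : Type*} [Fintype V] [DecidableEq V] (f g : (V → Bool) → ℝ) : ℝ :=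
  ((2 : ℝ) ^ (Fintype.card V))⁻¹ * ∑ x : V → Bool, f x * g x


/-- `multiLift m ψ x = Σ_{y ≤ x, ‖y‖ = m} ψ(y)`. -/
noncomputable def multiLift {V : Type*} [Fintype V] [DecidableEq V] (m : ℕ)
    (ψ : (V → Bool) → ℝ) (x : V → Bool) : ℝ :=
  ∑ y ∈ Finset.univ.filter
      (fun y : V → Bool => countB y = m ∧ ∀ v, y v = true → x v = true), ψ y

lemma swapAt_comp {V : Type*} [DecidableEq V] (x : V → Bool) (u v : V) :
    swapAt x u v = x ∘ (Equiv.swap u v) := by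
  funext w
  simp only [swapAt, Function.comp, Equiv.swap_apply_def]
  split_ifs <;> simp_all

lemma swapAt_swapAt {V : Type*} [DecidableEq V] (x : V → Bool) (u v : V) :
    swapAt (swapAt x u v) u v = x := by
  funext w
  simp [swapAt_comp, Function.comp, Equiv.swap_apply_self]

lemma countB_swapAt {V : Type*} [Fintype V] [DecidableEq V] (x : V → Bool) (u v : V) :
    countB (swapAt x u v) = countB x := by
  rw [swapAt_comp]
  unfold countB
  apply Finset.card_equiv (Equiv.swap u v)
  intro w
  rw [Finset.mem_filter, Finset.mem_filter]
  simp [Equiv.swap_apply_def]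

lemma le_swapAt {V : Type*} [DecidableEq V] {x y : V → Bool} (u v : V)
    (h : ∀ w, y w = true → x w = true) :
    ∀ w, swapAt y u v w = true → swapAt x u v w = true := by
  intro w
  simp only [swapAt]
  split_ifs <;> exact h _

/-- If ψ is an eigenvector of -Q^(m) with eigenvalue λ and m < ℓ, then
x ↦ Σ_{y ≤ x, ‖y‖=m} ψ(y) satisfies -Q^(ℓ) ψ = λ ψ at level ℓ. -/
theorem multiLift_is_eigenvector {V : Type*} [Fintype V] [DecidableEq V]
    (G : SimpleGraph V) [DecidableRel G.Adj] (hG : G.Connected)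
    (α : ℝ) (hα : 0 < α) (m ℓ : ℕ) (hmℓ : m < ℓ) (hℓ : ℓ ≤ Fintype.card V)
    (ψ : (V → Bool) → ℝ) (lam : ℝ)
    (hψ : ∃ x, countB x = m ∧ ψ x ≠ 0)
    (heig : ∀ x, countB x = m → negGen G α ψ x = lam * ψ x) :
    ∀ x, countB x = ℓ → negGen G α (multiLift m ψ) x = lam * multiLift m ψ x := by
  intro x _
  classical
  set S := Finset.univ.filter
      (fun y : V → Bool => countB y = m ∧ ∀ v, y v = true → x v = true) with hS
  have hLx : multiLift m ψ x = ∑ y ∈ S, ψ y := by rw [multiLift, hS]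
  have hlift : ∀ u v : V, multiLift m ψ (swapAt x u v) = ∑ y ∈ S, ψ (swapAt y u v) := by
    intro u v
    rw [multiLift, hS]
    refine Finset.sum_nbij' (fun y => swapAt y u v) (fun y => swapAt y u v) ?_ ?_ ?_ ?_ ?_
    · intro a ha
      simp only [Finset.mem_filter, Finset.mem_univ, true_and] at ha ⊢
      refine ⟨(countB_swapAt a u v).trans ha.1, ?_⟩
      intro w hw
      have h2 := le_swapAt u v ha.2 w hw
      rwa [swapAt_swapAt] at h2
    · intro a ha
      simp only [Finset.mem_filter, Finset.mem_univ, true_and] at ha ⊢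
      exact ⟨(countB_swapAt a u v).trans ha.1, le_swapAt u v ha.2⟩
    · intro a _; exact swapAt_swapAt a u v
    · intro a _; exact swapAt_swapAt a u v
    · intro a _; rw [swapAt_swapAt]
  have key : ∀ u v : V,
      (if G.Adj u v then multiLift m ψ x - multiLift m ψ (swapAt x u v) else 0)
      = ∑ y ∈ S, (if G.Adj u v then ψ y - ψ (swapAt y u v) else 0) := by
    intro u v
    split_ifs with h
    · rw [hLx, hlift u v, Finset.sum_sub_distrib]
    · simp
  have hnegg : negGen G α (multiLift m ψ) x = ∑ y ∈ S, negGen G α ψ y := by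
    unfold negGen
    simp_rw [key]
    have comm : (∑ u : V, ∑ v : V, ∑ y ∈ S, (if G.Adj u v then ψ y - ψ (swapAt y u v) else 0))
        = ∑ y ∈ S, ∑ u : V, ∑ v : V, (if G.Adj u v then ψ y - ψ (swapAt y u v) else 0) :=
      calc (∑ u : V, ∑ v : V, ∑ y ∈ S, (if G.Adj u v then ψ y - ψ (swapAt y u v) else 0))
          = ∑ u : V, ∑ y ∈ S, ∑ v : V, (if G.Adj u v then ψ y - ψ (swapAt y u v) else 0) :=
            Finset.sum_congr rfl fun u _ => Finset.sum_comm
        _ = ∑ y ∈ S, ∑ u : V, ∑ v : V, (if G.Adj u v then ψ y - ψ (swapAt y u v) else 0) :=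
            Finset.sum_comm
    rw [comm, Finset.mul_sum]
  rw [hnegg, Finset.sum_congr rfl (fun y hy => heig y ?_), ← Finset.mul_sum, hLx]
  simp only [hS, Finset.mem_filter] at hy
  exact hy.2.1
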